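/- For any n, m ∈ ℕ⁺ with m ≥ n and any vector v ∈ ℝ^m, it holds that ‖P̃^{n,m} v‖₂² ≤ 2(n/m)·‖v‖₂². -/

import Mathlib

open MeasureTheory ProbabilityTheory Finset
open scoped ENNReal NNReal

noncomputable section

/-- Ceiling division of naturals: `cdiv a b = ⌈a / b⌉` whenever `b > 0`. -/
def cdiv (a b : ℕ) : ℕ := (a + b - 1) / b

/-- The alignment operator `P^{n,m}`: for 1-based indices `I = i+1 ∈ [n]`, `J = j+1 ∈ [m]`,
the `(I,J)` entry is `1` if `⌈(J-1)n/m⌉ + 1 ≤ I ≤ ⌈Jn/m⌉` and `0` otherwise. -/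
def alignP (n m : ℕ) : Matrix (Fin n) (Fin m) ℝ :=
  Matrix.of fun i j =>
    if cdiv (j.val * n) m < i.val + 1 ∧ i.val + 1 ≤ cdiv ((j.val + 1) * n) m then 1 else 0

/-- The averaging alignment operator `P̃^{n,m}` (for `n ≤ m`): the `(I,J)` entry is
`1/(⌈Im/n⌉ - ⌈(I-1)m/n⌉)` if `⌈(I-1)m/n⌉ + 1 ≤ J ≤ ⌈Im/n⌉` and `0` otherwise. -/
def alignPt (n m : ℕ) : Matrix (Fin n) (Fin m) ℝ :=
  Matrix.of fun i j =>
    if cdiv (i.val * m) n < j.val + 1 ∧ j.val + 1 ≤ cdiv ((i.val + 1) * m) n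
    then ((cdiv ((i.val + 1) * m) n : ℝ) - (cdiv (i.val * m) n : ℝ))⁻¹ else 0

/-- Squared `ℓ₂` norm of a vector. -/
def sqNorm {n : ℕ} (v : Fin n → ℝ) : ℝ := ∑ i, (v i) ^ 2

/-- `‖Dθ‖₁ = Σ_{i=1}^{n-1} |θ_i - θ_{i+1}|`. -/
def dNorm1 {n : ℕ} (θ : Fin n → ℝ) : ℝ :=
  ∑ i : Fin (n - 1),
    |θ ⟨i.val, by have := i.isLt; omega⟩ - θ ⟨i.val + 1, by have := i.isLt; omega⟩|

/-- `‖Dθ‖₀`: the number of change points of `θ`. -/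
def dNorm0 {n : ℕ} (θ : Fin n → ℝ) : ℕ :=
  (Finset.univ.filter fun i : Fin (n - 1) =>
    θ ⟨i.val, by have := i.isLt; omega⟩ ≠ θ ⟨i.val + 1, by have := i.isLt; omega⟩).card

/-- `Z` is a mean-zero `σ`-sub-Gaussian random variable: it is measurable, has zero mean,
and its Orlicz `ψ₂`-norm is at most `σ`, the latter being expressed by the (equivalent)
condition that `E exp(Z²/t²) ≤ 2` for every `t > σ`. -/
def IsSubG {Ω : Type*} [MeasurableSpace Ω] (μ : Measure Ω) (σ : ℝ) (Z : Ω → ℝ) : Prop :=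
  Measurable Z ∧ (∫ ω, Z ω ∂μ) = 0 ∧
    ∀ t : ℝ, σ < t →
      (∫⁻ ω, ENNReal.ofReal (Real.exp ((Z ω) ^ 2 / t ^ 2)) ∂μ) ≤ 2

/-- The set of (1-based) change-point locations `S = {t ∈ [n-1] : f_t ≠ f_{t+1}}`. -/
def chgPts {n : ℕ} (f : Fin n → ℝ) : Finset ℕ :=
  (Finset.univ.filter fun i : Fin (n - 1) =>
    f ⟨i.val, by have := i.isLt; omega⟩ ≠ f ⟨i.val + 1, by have := i.isLt; omega⟩).image
    fun i => i.val + 1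

/-- The boundaries `0 = t₀ < t₁ < ⋯ < t_{s₀} < t_{s₀+1} = n` of the blocks of `f`. -/
def boundaries {n : ℕ} (f : Fin n → ℝ) : List ℕ :=
  0 :: ((chgPts f).sort (· ≤ ·) ++ [n])

/-- The block lengths `n_i^{(0)} = t_i - t_{i-1}`, `i ∈ [s₀+1]`. -/
def blockLengths {n : ℕ} (f : Fin n → ℝ) : List ℕ :=
  List.zipWith (fun b a => b - a) (boundaries f).tail (boundaries f)

/-- The minimal length condition (Assumption 1): `max_i n_i^{(0)} ≤ c_max · min_i n_i^{(0)}`. -/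
def MinimalLength {n : ℕ} (cmax : ℝ) (f : Fin n → ℝ) : Prop :=
  ∀ a ∈ blockLengths f, ∀ b ∈ blockLengths f, (a : ℝ) ≤ cmax * (b : ℝ)

/-- `r` is the `ℓ₂` operator (spectral) norm of the matrix `M`. -/
def IsOpNorm {n m : ℕ} (M : Matrix (Fin n) (Fin m) ℝ) (r : ℝ) : Prop :=
  0 ≤ r ∧ (∀ v, sqNorm (M.mulVec v) ≤ r ^ 2 * sqNorm v) ∧
    ∀ s : ℝ, 0 ≤ s → (∀ v, sqNorm (M.mulVec v) ≤ s ^ 2 * sqNorm v) → r ≤ s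

/-- The block of the coordinate `i` determined by the cut set `M ⊆ [n-1]`:
`j` is in the block of `i` iff no cut `t ∈ M` separates them. -/
def blockOf {n : ℕ} (M : Finset (Fin (n - 1))) (i : Fin n) : Finset (Fin n) :=
  Finset.univ.filter fun j => ∀ t ∈ M, (i.val ≤ t.val ↔ j.val ≤ t.val)

/-- The blockwise-averaging orthogonal projection `P^M`. -/
def blockProj {n : ℕ} (M : Finset (Fin (n - 1))) (v : Fin n → ℝ) : Fin n → ℝ :=
  fun i => (∑ j ∈ blockOf M i, v j) / (blockOf M i).card

/-- The multisource alignment operator `P^{{n_k}_{k=0}^K, n₀}` (with `n₀ = nk 0`). -/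
def alignPMulti (K : ℕ) (nk : Fin (K + 1) → ℕ) :
    Matrix (Fin (∑ k, nk k)) (Fin (nk 0)) ℝ :=
  Matrix.of fun i j =>
    if (∑ k, cdiv (j.val * nk k) (nk 0)) < i.val + 1 ∧
        i.val + 1 ≤ ∑ k, cdiv ((j.val + 1) * nk k) (nk 0) then 1 else 0

/-- The multisource averaging alignment operator `P̃^{n₀, {n_k}_{k=0}^K}` (with `n₀ = nk 0`). -/
def alignPtMulti (K : ℕ) (nk : Fin (K + 1) → ℕ) :
    Matrix (Fin (nk 0)) (Fin (∑ k, nk k)) ℝ :=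
  Matrix.of fun i j =>
    if (∑ k, cdiv (i.val * nk k) (nk 0)) < j.val + 1 ∧
        j.val + 1 ≤ ∑ k, cdiv ((i.val + 1) * nk k) (nk 0)
    then (((∑ k, cdiv ((i.val + 1) * nk k) (nk 0) : ℕ) : ℝ) -
          ((∑ k, cdiv (i.val * nk k) (nk 0) : ℕ) : ℝ))⁻¹ else 0

/-- `J̃_{j,k} = Σ_{k̃=0}^{k-1} ⌈j n_{k̃}/n₀⌉ + Σ_{k̃=k}^{K} ⌈(j-1) n_{k̃}/n₀⌉` (with `j` 1-based,
`n₀ = nk 0`). -/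
def Jt (K : ℕ) (nk : Fin (K + 1) → ℕ) (j k : ℕ) : ℕ :=
  ∑ t : Fin (K + 1),
    if t.val < k then cdiv (j * nk t) (nk 0) else cdiv ((j - 1) * nk t) (nk 0)

/-- The (1-based) positions `{⌈j n₁/n₀⌉ + j : j ∈ [n₀]}` occupied by the target data in the
interleaved vector. -/
def tpos (n₀ n₁ : ℕ) : Finset ℕ :=
  (Finset.range n₀).image fun j => cdiv ((j + 1) * n₁) n₀ + (j + 1)

/-- `mcount n₀ n₁ I = |{⌈j n₁/n₀⌉ + j : j ∈ [n₀]} ∩ [I]|`. -/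
def mcount (n₀ n₁ I : ℕ) : ℕ := ((tpos n₀ n₁).filter (· ≤ I)).card

/-- The interleaved data vector `ỹ ∈ ℝ^{n₁+n₀}`: `ỹ_I = y_j` if `I = ⌈j n₁/n₀⌉ + j` for some
`j ∈ [n₀]`, and otherwise `ỹ_I = y¹_{I - mcount n₀ n₁ I}`. -/
def interleave (n₀ n₁ : ℕ) (y : Fin n₀ → ℝ) (y1 : Fin n₁ → ℝ) : Fin (n₁ + n₀) → ℝ :=
  fun i =>
    if h : ∃ j : Fin n₀, i.val + 1 = cdiv ((j.val + 1) * n₁) n₀ + (j.val + 1) then y h.choose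
    else if h2 : i.val - mcount n₀ n₁ (i.val + 1) < n₁ then y1 ⟨_, h2⟩ else 0

end

lemma cdiv_add_div_le (a c b : ℕ) (hb : 0 < b) : cdiv a b + c / b ≤ cdiv (a + c) b := by
  unfold cdiv
  rw [Nat.le_div_iff_mul_le hb]
  have h1 := Nat.div_mul_le_self (a + b - 1) b
  have h2 := Nat.div_mul_le_self c b
  have : ((a + b - 1) / b + c / b) * b = (a + b - 1) / b * b + c / b * b := by ring
  omega

/-- **Lemma 3**: `‖P̃^{n,m} v‖₂² ≤ 2(n/m)‖v‖₂²` for `m ≥ n`. -/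
theorem alignPt_contraction (n m : ℕ) (hn : 0 < n) (hnm : n ≤ m) (v : Fin m → ℝ) :
    sqNorm ((alignPt n m).mulVec v) ≤ 2 * ((n : ℝ) / m) * sqNorm v := by
  classical
  have hm : 0 < m := lt_of_lt_of_le hn hnm
  set a : ℕ → ℕ := fun i => cdiv (i * m) n with ha_def
  have hstep : ∀ i : ℕ, a i + m / n ≤ a (i + 1) := by
    intro i
    have h := cdiv_add_div_le (i * m) m n hn
    simpa [ha_def, add_mul, one_mul] using h
  have hdivpos : 1 ≤ m / n := (Nat.one_le_div_iff hn).2 hnm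
  have hamono : Monotone a := by
    intro i j hij
    simp only [ha_def]
    unfold cdiv
    exact Nat.div_le_div_right (by
      have := Nat.mul_le_mul_right m hij; omega)
  set L : ℕ → ℕ := fun i => a (i + 1) - a i with hL_def
  have hL1 : ∀ i, 1 ≤ L i := fun i => by have := hstep i; simp only [hL_def]; omega
  have hLm : ∀ i, m ≤ 2 * n * L i := by
    intro i
    have h1 := hstep i
    have h2 := Nat.div_add_mod m n
    have h3 := Nat.mod_lt m hn
    have h4 : m / n ≤ L i := by simp only [hL_def]; omega
    calc m ≤ 2 * n * (m / n) := by nlinarith [Nat.div_add_mod m n]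
    _ ≤ 2 * n * L i := Nat.mul_le_mul_left _ h4
  set S : Fin n → Finset (Fin m) := fun i =>
    Finset.univ.filter (fun j : Fin m => a i.val ≤ j.val ∧ j.val < a (i.val + 1)) with hS_def
  have hrow : ∀ i : Fin n,
      (alignPt n m).mulVec v i = (L i.val : ℝ)⁻¹ * ∑ j ∈ S i, v j := by
    intro i
    have hcast : ((cdiv ((i.val + 1) * m) n : ℝ) - (cdiv (i.val * m) n : ℝ))
        = (L i.val : ℝ) := by
      have := hamono (Nat.le_succ i.val)
      simp only [hL_def, ha_def] at *
      push_cast [Nat.cast_sub this]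
      ring
    simp only [Matrix.mulVec, dotProduct, alignPt, Matrix.of_apply, hcast, ite_mul, zero_mul]
    rw [Finset.mul_sum, hS_def]
    rw [Finset.sum_filter]
    apply Finset.sum_congr rfl
    intro j _
    have : (cdiv (i.val * m) n < j.val + 1 ∧ j.val + 1 ≤ cdiv ((i.val + 1) * m) n)
        ↔ (a i.val ≤ j.val ∧ j.val < a (i.val + 1)) := by
      simp only [ha_def]; omega
    simp only [this]
  have hC : (0:ℝ) ≤ 2 * ((n : ℝ) / m) := by positivity
  have hterm : ∀ i : Fin n,
      ((alignPt n m).mulVec v i) ^ 2 ≤ 2 * ((n : ℝ) / m) * ∑ j ∈ S i, (v j) ^ 2 := by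
    intro i
    rw [hrow i]
    have hLpos : (0:ℝ) < (L i.val : ℝ) := by exact_mod_cast hL1 i.val
    have hcard : ((S i).card : ℝ) ≤ (L i.val : ℝ) := by
      have : (S i).card ≤ L i.val := by
        have : (S i).card ≤ (Finset.Ico (a i.val) (a (i.val + 1))).card := by
          apply Finset.card_le_card_of_injOn (fun j => j.val)
          · intro j hj
            simp only [hS_def, Finset.mem_coe, Finset.mem_filter] at hj
            simp [Finset.mem_Ico, hj.2.1, hj.2.2]
          · intro x _ y _ h
            exact Fin.ext h
        simpa [hL_def] using this
      exact_mod_cast this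
    have hCS : (∑ j ∈ S i, v j) ^ 2 ≤ ((S i).card : ℝ) * ∑ j ∈ S i, (v j) ^ 2 :=
      sq_sum_le_card_mul_sum_sq
    have hsumsq : (0:ℝ) ≤ ∑ j ∈ S i, (v j) ^ 2 :=
      Finset.sum_nonneg fun j _ => sq_nonneg _
    have key : (L i.val : ℝ)⁻¹ ≤ 2 * ((n : ℝ) / m) := by
      rw [inv_le_iff_one_le_mul₀ hLpos]
      have hmr : (0:ℝ) < (m:ℝ) := by exact_mod_cast hm
      have h2 : (m : ℝ) ≤ 2 * n * L i.val := by exact_mod_cast hLm i.val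
      have he : 2 * ((n:ℝ) / m) * (L i.val : ℝ) = 2 * n * (L i.val : ℝ) / m := by ring
      rw [he, le_div_iff₀ hmr]
      linarith
    calc ((L i.val : ℝ)⁻¹ * ∑ j ∈ S i, v j) ^ 2
        = ((L i.val : ℝ)⁻¹)^2 * (∑ j ∈ S i, v j) ^ 2 := by ring
      _ ≤ ((L i.val : ℝ)⁻¹)^2 * ((L i.val : ℝ) * ∑ j ∈ S i, (v j)^2) := by
          apply mul_le_mul_of_nonneg_left _ (by positivity)
          exact hCS.trans (mul_le_mul_of_nonneg_right hcard hsumsq)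
      _ = (L i.val : ℝ)⁻¹ * ∑ j ∈ S i, (v j)^2 := by
          field_simp
      _ ≤ 2 * ((n : ℝ) / m) * ∑ j ∈ S i, (v j)^2 :=
          mul_le_mul_of_nonneg_right key hsumsq
  have hdisj : ∀ i i' : Fin n, i ≠ i' → Disjoint (S i) (S i') := by
    have key : ∀ i i' : Fin n, i.val < i'.val → Disjoint (S i) (S i') := by
      intro i i' hlt
      rw [Finset.disjoint_left]
      intro j hj hj'
      simp only [hS_def, Finset.mem_filter] at hj hj'
      have : a (i.val + 1) ≤ a i'.val := hamono hlt
      omega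
    intro i i' hne
    rcases lt_or_gt_of_ne (fun h => hne (Fin.ext h)) with h | h
    · exact key _ _ h
    · exact (key _ _ h).symm
  have hsum : ∑ i : Fin n, ∑ j ∈ S i, (v j) ^ 2 ≤ ∑ j : Fin m, (v j) ^ 2 := by
    rw [← Finset.sum_biUnion (fun i _ i' _ h => hdisj i i' h)]
    exact Finset.sum_le_sum_of_subset_of_nonneg (Finset.subset_univ _)
      (fun j _ _ => sq_nonneg _)
  calc sqNorm ((alignPt n m).mulVec v)
      = ∑ i : Fin n, ((alignPt n m).mulVec v i) ^ 2 := rfl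
    _ ≤ ∑ i : Fin n, 2 * ((n : ℝ) / m) * ∑ j ∈ S i, (v j) ^ 2 :=
        Finset.sum_le_sum fun i _ => hterm i
    _ = 2 * ((n : ℝ) / m) * ∑ i : Fin n, ∑ j ∈ S i, (v j) ^ 2 := by
        rw [Finset.mul_sum]
    _ ≤ 2 * ((n : ℝ) / m) * ∑ j : Fin m, (v j) ^ 2 :=
        mul_le_mul_of_nonneg_left hsum hC
    _ = 2 * ((n : ℝ) / m) * sqNorm v := rfl
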